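/- arXiv:2001.02659 — 6 statements merged into one kernel-verified Lean document; each statement's English description precedes it below -/
import Mathlib

section
/- For a monotone function f on a complete lattice, the accumulation principle holds: y ⊑ G_f(r) if and only if y ⊑ G_f(r ⊔ y). -/
def pG {C : Type*} [CompleteLattice C] (f : C →o C) (r : C) : C :=
  OrderHom.gfp ⟨fun y => f (r ⊔ y), fun _ _ h => f.mono (sup_le_sup_left h r)⟩

theorem pG_acc {C : Type*} [CompleteLattice C] (f : C →o C) (r y : C) :
    y ≤ pG f r ↔ y ≤ pG f (r ⊔ y) := by
  have hfix : ∀ s, f (s ⊔ pG f s) = pG f s := fun s =>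
    OrderHom.map_gfp ⟨fun z => f (s ⊔ z), fun _ _ h => f.mono (sup_le_sup_left h s)⟩
  constructor
  · intro h
    refine le_trans h (OrderHom.le_gfp _ ?_)
    show pG f r ≤ f (r ⊔ y ⊔ pG f r)
    rw [sup_assoc, sup_eq_right.mpr h, hfix]
  · intro h
    refine le_trans h (OrderHom.le_gfp _ ?_)
    show pG f (r ⊔ y) ≤ f (r ⊔ pG f (r ⊔ y))
    have : r ⊔ pG f (r ⊔ y) = r ⊔ y ⊔ pG f (r ⊔ y) := by
      rw [sup_assoc, sup_eq_right.mpr h]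
    rw [this, hfix]
end

section
/- (Step rule) For the generalized parameterized greatest fixed point Ĝ_f(r,g) := r ⊔ G_f(r ⊔ g), we have f(Ĝ_f(g,g)) ⊑ Ĝ_f(r,g) for all r, g with r ⊑ g. -/
def gpG {C : Type*} [CompleteLattice C] (f : C →o C) (r g : C) : C :=
  r ⊔ pG f (r ⊔ g)

theorem gpG_step {C : Type*} [CompleteLattice C] (f : C →o C) (r g : C) (hrg : r ≤ g) :
    f (gpG f g g) ≤ gpG f r g := by
  have hfix : f (g ⊔ pG f g) = pG f g := by
    have := OrderHom.map_gfp ⟨fun y => f (g ⊔ y), fun _ _ h => f.mono (sup_le_sup_left h g)⟩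
    exact this
  simp only [gpG, sup_idem, sup_eq_right.mpr hrg]
  rw [hfix]
  exact le_sup_right
end

section
/- The companion cpn_f, defined as the pointwise join of all monotone functions compatible with f, is itself monotone and compatible with f. -/
/-- The companion: pointwise join of all monotone functions compatible with `f`. -/
def cpn {C : Type*} [CompleteLattice C] (f : C →o C) (x : C) : C :=
  sSup { y | ∃ g : C →o C, (∀ z, g (f z) ≤ f (g z)) ∧ y = g x }

theorem cpn_monotone_compatible {C : Type*} [CompleteLattice C] (f : C →o C) :
    Monotone (cpn f) ∧ ∀ x, cpn f (f x) ≤ f (cpn f x) := by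
  constructor
  · intro x y hxy
    apply sSup_le
    rintro _ ⟨g, hg, rfl⟩
    exact le_trans (g.monotone hxy) (le_sSup ⟨g, hg, rfl⟩)
  · intro x
    apply sSup_le
    rintro _ ⟨g, hg, rfl⟩
    exact le_trans (hg x) (f.monotone (le_sSup ⟨g, hg, rfl⟩))
end

section
/- The companion cpn_f is idempotent: cpn_f ∘ cpn_f = cpn_f, and it contains the identity: x ⊑ cpn_f(x) for all x. -/
lemma le_cpn_of_compat {C : Type*} [CompleteLattice C] (f g : C →o C)
    (hg : ∀ z, g (f z) ≤ f (g z)) (x : C) : g x ≤ cpn f x :=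
  le_sSup ⟨g, hg, rfl⟩

lemma cpn_mono {C : Type*} [CompleteLattice C] (f : C →o C) :
    Monotone (cpn f) := by
  intro x y hxy
  apply sSup_le
  rintro _ ⟨g, hg, rfl⟩
  exact le_trans (g.mono hxy) (le_cpn_of_compat f g hg y)

lemma cpn_compat {C : Type*} [CompleteLattice C] (f : C →o C) (z : C) :
    cpn f (f z) ≤ f (cpn f z) := by
  apply sSup_le
  rintro _ ⟨g, hg, rfl⟩
  exact le_trans (hg z) (f.mono (le_cpn_of_compat f g hg z))

lemma id_le_cpn {C : Type*} [CompleteLattice C] (f : C →o C) (x : C) :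
    x ≤ cpn f x :=
  le_cpn_of_compat f (OrderHom.id) (fun z => le_refl (f z)) x

theorem cpn_idem_and_id {C : Type*} [CompleteLattice C] (f : C →o C) :
    (∀ x, cpn f (cpn f x) = cpn f x) ∧ (∀ x, x ≤ cpn f x) := by
  refine ⟨fun x => le_antisymm ?_ (id_le_cpn f _), id_le_cpn f⟩
  let c : C →o C := ⟨cpn f, cpn_mono f⟩
  have : (c.comp c) x ≤ cpn f x := by
    apply le_cpn_of_compat
    intro z
    exact le_trans (cpn_mono f (cpn_compat f z)) (cpn_compat f (cpn f z))
  exact this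
end

section
/- The greatest fixed point of f coincides with the companion applied to bottom: gfp(f) = cpn_f(⊥). -/
theorem gfp_eq_cpn_bot {C : Type*} [CompleteLattice C] (f : C →o C) :
    OrderHom.gfp f = cpn f ⊥ := by
  apply le_antisymm
  · apply le_sSup
    refine ⟨OrderHom.const C (OrderHom.gfp f), fun z => ?_, rfl⟩
    show OrderHom.gfp f ≤ f (OrderHom.gfp f)
    rw [OrderHom.map_gfp]
  · apply sSup_le
    rintro y ⟨g, hg, rfl⟩
    calc g ⊥ ≤ g (OrderHom.gfp f) := g.monotone bot_le
      _ ≤ OrderHom.gfp f := by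
          apply OrderHom.le_gfp
          calc g (OrderHom.gfp f) = g (f (OrderHom.gfp f)) := by rw [OrderHom.map_gfp]
            _ ≤ f (g (OrderHom.gfp f)) := hg _
end

section
/- Weak bisimilarity ≈ on streams is symmetric and transitive, hence an equivalence relation. -/
/-- Shapes of stream constructors: end, internal step, visible event. -/
inductive SShape : Type where
  | eps : SShape
  | tau : SShape
  | vis : ℕ → SShape

/-- Polynomial functor for streams: ε has no child, τ and β(n) have one child. -/
def SP : PFunctor :=
  ⟨SShape, fun a => match a with | .eps => Empty | .tau => Unit | .vis _ => Unit⟩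

/-- Coinductive streams, as the final coalgebra (M-type) of `SP`. -/
def StreamT : Type := SP.M

def seps : StreamT := PFunctor.M.mk ⟨SShape.eps, Empty.elim⟩
def stau (s : StreamT) : StreamT := PFunctor.M.mk ⟨SShape.tau, fun _ => s⟩
def svis (n : ℕ) (s : StreamT) : StreamT := PFunctor.M.mk ⟨SShape.vis n, fun _ => s⟩
/-- The mixed inductive-coinductive functor for weak bisimilarity:
corecursive matching of ε/ε, τ/τ, β(n)/β(n) plus inductive stripping
of a single τ on either side. -/
inductive EuttF (X : StreamT → StreamT → Prop) : StreamT → StreamT → Prop where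
  | eps : EuttF X seps seps
  | tau {s t : StreamT} : X s t → EuttF X (stau s) (stau t)
  | vis {n : ℕ} {s t : StreamT} : X s t → EuttF X (svis n s) (svis n t)
  | tauL {s t : StreamT} : EuttF X s t → EuttF X (stau s) t
  | tauR {s t : StreamT} : EuttF X s t → EuttF X s (stau t)

/-- Weak bisimilarity (equivalence up-to-tau): the greatest fixed point of `EuttF`. -/
def Eutt (s t : StreamT) : Prop :=
  ∃ R : StreamT → StreamT → Prop, (∀ a b, R a b → EuttF R a b) ∧ R s t

/-! ### Auxiliary lemmas -/

section Aux

/-- Head shape of a stream. -/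
def shead (s : StreamT) : SShape := (PFunctor.M.dest s).1

lemma shead_seps : shead seps = .eps := rfl
lemma shead_stau (s : StreamT) : shead (stau s) = .tau := rfl
lemma shead_svis (n : ℕ) (s : StreamT) : shead (svis n s) = .vis n := rfl

lemma seps_ne_stau (s : StreamT) : seps ≠ stau s := by
  intro h; have := congrArg shead h; simp [shead_seps, shead_stau] at this

lemma seps_ne_svis (n : ℕ) (s : StreamT) : seps ≠ svis n s := by
  intro h; have := congrArg shead h; simp [shead_seps, shead_svis] at this

lemma stau_ne_svis (s : StreamT) (n : ℕ) (t : StreamT) : stau s ≠ svis n t := by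
  intro h; have := congrArg shead h; simp [shead_stau, shead_svis] at this

lemma stau_inj {s t : StreamT} (h : stau s = stau t) : s = t := by
  have h2 := PFunctor.M.mk_inj h
  injection h2 with h3 h4
  exact congrFun h4 ()

lemma svis_inj {n m : ℕ} {s t : StreamT} (h : svis n s = svis m t) :
    n = m ∧ s = t := by
  have h2 := PFunctor.M.mk_inj h
  injection h2 with h3 h4
  injection h3 with h5
  refine ⟨h5, ?_⟩
  subst h5
  exact congrFun h4 ()

/-- Every stream has one of the three shapes. -/
lemma shape_cases (c : StreamT) :
    c = seps ∨ (∃ c', c = stau c') ∨ (∃ n c', c = svis n c') := by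
  have h := (PFunctor.M.mk_dest c).symm
  rcases hd : PFunctor.M.dest c with ⟨a, f⟩
  rw [hd] at h
  cases a with
  | eps =>
      left
      rw [h]
      show PFunctor.M.mk _ = _
      unfold seps
      congr 1
      congr 1
      funext x
      exact x.elim
  | tau =>
      right; left
      exact ⟨f (), by rw [h]; unfold stau; congr⟩
  | vis n =>
      right; right
      exact ⟨n, f (), by rw [h]; unfold svis; congr⟩

lemma euttF_mono {X Y : StreamT → StreamT → Prop} (h : ∀ a b, X a b → Y a b) :
    ∀ {a b}, EuttF X a b → EuttF Y a b := by
  intro a b d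
  induction d with
  | eps => exact .eps
  | tau hx => exact .tau (h _ _ hx)
  | vis hx => exact .vis (h _ _ hx)
  | tauL _ ih => exact .tauL ih
  | tauR _ ih => exact .tauR ih

lemma eutt_unfold {a b : StreamT} (h : Eutt a b) : EuttF Eutt a b := by
  obtain ⟨X, hX, hab⟩ := h
  exact euttF_mono (fun p q hpq => ⟨X, hX, hpq⟩) (hX _ _ hab)

lemma eutt_fold {a b : StreamT} (h : EuttF Eutt a b) : Eutt a b :=
  ⟨EuttF Eutt, fun _ _ hpq => euttF_mono (fun _ _ => eutt_unfold) hpq, h⟩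

lemma eutt_refl (a : StreamT) : Eutt a a := by
  refine ⟨Eq, fun p q hpq => ?_, rfl⟩
  subst hpq
  rcases shape_cases p with h | ⟨c', h⟩ | ⟨n, c', h⟩ <;> subst h
  · exact .eps
  · exact .tau rfl
  · exact .vis rfl

lemma euttF_swap {X : StreamT → StreamT → Prop} :
    ∀ {a b}, EuttF X a b → EuttF (fun p q => X q p) b a := by
  intro a b d
  induction d with
  | eps => exact .eps
  | tau hx => exact .tau hx
  | vis hx => exact .vis hx
  | tauL _ ih => exact .tauR ih
  | tauR _ ih => exact .tauL ih

lemma eutt_symm {a b : StreamT} (h : Eutt a b) : Eutt b a := by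
  obtain ⟨X, hX, hab⟩ := h
  exact ⟨fun p q => X q p, fun _ _ hpq => euttF_swap (hX _ _ hpq), hab⟩

/-- Strip a τ from the left of an `EuttF Eutt` derivation. -/
lemma euttF_tauL_inv {s t : StreamT} (h : EuttF Eutt (stau s) t) : EuttF Eutt s t := by
  generalize hu : stau s = u at h
  induction h generalizing s with
  | eps => exact absurd hu.symm (seps_ne_stau _)
  | @tau s₀ t₀ hx =>
      rw [stau_inj hu]
      exact .tauR (eutt_unfold hx)
  | @vis n s₀ t₀ hx => exact absurd hu (stau_ne_svis _ _ _)
  | @tauL s₀ t₀ d ih =>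
      rw [stau_inj hu]; exact d
  | tauR _ ih => exact .tauR (ih hu)

/-- Strip a τ from the right of an `EuttF Eutt` derivation. -/
lemma euttF_tauR_inv' {s t : StreamT} (h : EuttF Eutt s (stau t)) : EuttF Eutt s t := by
  generalize hu : stau t = u at h
  induction h generalizing t with
  | eps => exact absurd hu.symm (seps_ne_stau _)
  | @tau s₀ t₀ hx =>
      rw [stau_inj hu]
      exact .tauL (eutt_unfold hx)
  | @vis n s₀ t₀ hx => exact absurd hu (stau_ne_svis _ _ _)
  | tauL _ ih => exact .tauL (ih hu)
  | @tauR s₀ t₀ d ih =>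
      rw [stau_inj hu]; exact d

lemma eutt_tau_inv {s t : StreamT} (h : Eutt (stau s) (stau t)) : Eutt s t :=
  eutt_fold (euttF_tauR_inv' (euttF_tauL_inv (eutt_unfold h)))

/-- Composition relation: the up-to closure for transitivity. -/
def Rc (x z : StreamT) : Prop := ∃ y, Eutt x y ∧ Eutt y z

lemma eutt_le_Rc {x z : StreamT} (h : Eutt x z) : Rc x z := ⟨z, h, eutt_refl z⟩

lemma lemE {n : ℕ} {y' c' : StreamT} (hyc : Eutt y' c') :
    ∀ {x}, EuttF Eutt x (svis n y') → EuttF Rc x (svis n c') := by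
  intro x h
  generalize hu : svis n y' = u at h
  induction h generalizing y' with
  | eps => exact absurd hu.symm (seps_ne_svis _ _)
  | tau hx => exact absurd hu.symm (stau_ne_svis _ _ _)
  | @vis m s t hx =>
      obtain ⟨hn, ht⟩ := svis_inj hu
      subst hn
      exact .vis ⟨y', ht ▸ hx, hyc⟩
  | tauL _ ih => exact .tauL (ih hyc hu)
  | tauR _ ih => exact absurd hu.symm (stau_ne_svis _ _ _)

lemma lemF : ∀ {y c}, EuttF Eutt y c → shead c ≠ .tau →
    ∀ {x}, Eutt x y → EuttF Rc x c := by
  intro y c d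
  induction d with
  | eps =>
      intro _ x hx
      exact euttF_mono (fun _ _ => eutt_le_Rc) (eutt_unfold hx)
  | @tau s t _ =>
      intro hc
      exact absurd (shead_stau t) hc
  | @vis n s t hst =>
      intro _ x hx
      exact lemE hst (eutt_unfold hx)
  | @tauL s t d ih =>
      intro hc x hx
      exact ih hc (eutt_fold (euttF_tauR_inv' (eutt_unfold hx)))
  | @tauR s t _ _ =>
      intro hc
      exact absurd (shead_stau t) hc

lemma lemV {n : ℕ} {a' b' : StreamT} (h : Eutt a' b') :
    ∀ {c}, EuttF Eutt (svis n b') c → EuttF Rc (svis n a') c := by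
  intro c d
  generalize hu : svis n b' = u at d
  induction d generalizing b' with
  | eps => exact absurd hu.symm (seps_ne_svis _ _)
  | tau hx => exact absurd hu.symm (stau_ne_svis _ _ _)
  | @vis m s t hx =>
      obtain ⟨hn, hs⟩ := svis_inj hu
      subst hn
      exact .vis ⟨b', h, hs ▸ hx⟩
  | tauL _ ih => exact absurd hu.symm (stau_ne_svis _ _ _)
  | tauR _ ih => exact .tauR (ih h hu)

lemma main_lemma : ∀ {a b}, EuttF Eutt a b → ∀ {c}, EuttF Eutt b c → EuttF Rc a c := by
  intro a b d1
  induction d1 with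
  | eps =>
      intro c d2
      exact euttF_mono (fun _ _ => eutt_le_Rc) d2
  | @tau m1 m2 h =>
      intro c d2
      rcases shape_cases c with hc | ⟨m3, hc⟩ | ⟨n, m3, hc⟩
      · subst hc
        exact lemF d2 (by simp [shead_seps]) (eutt_fold (.tau h))
      · subst hc
        exact .tau ⟨m2, h, eutt_tau_inv (eutt_fold d2)⟩
      · subst hc
        exact lemF d2 (by simp [shead_svis]) (eutt_fold (.tau h))
  | vis h =>
      intro c d2
      exact lemV h d2
  | tauL _ ih =>
      intro c d2
      exact .tauL (ih d2)
  | tauR _ ih =>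
      intro c d2
      exact ih (euttF_tauL_inv d2)

lemma eutt_trans {a b c : StreamT} (h1 : Eutt a b) (h2 : Eutt b c) : Eutt a c :=
  ⟨Rc, fun _ _ ⟨_, hxy, hyz⟩ => main_lemma (eutt_unfold hxy) (eutt_unfold hyz),
    ⟨b, h1, h2⟩⟩

end Aux

theorem eutt_symm_trans_equiv :
    Symmetric Eutt ∧ Transitive Eutt ∧ Equivalence Eutt :=
  ⟨fun _ _ => eutt_symm, fun _ _ _ => eutt_trans,
    ⟨eutt_refl, eutt_symm, eutt_trans⟩⟩
end
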